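/- Let d ≥ 1 and a₁, a₂, b, ε > 0. Let K¹, K² : (0,∞) × ℝ^d × ℝ^d → ℂ be measurable functions satisfying |K¹_s(x, z)| ≤ a₁ s^{−(d+1)/2} e^{εs} e^{−b|x−z|²/s} and |K²_s(z, y)| ≤ a₂ s^{−(d+1)/2} e^{εs} e^{−b|z−y|²/s} for all s > 0 and x, y, z ∈ ℝ^d. Then for all t > 0 and x, y ∈ ℝ^d, ∫_0^t ∫_{ℝ^d} |K¹_s(x, z)| · |K²_{t−s}(z, y)| dz ds ≤ π · (π/b)^{d/2} · a₁ a₂ · t^{−d/2} · e^{εt} · e^{−b|x−y|²/t}. -/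

import Mathlib

open MeasureTheory
open scoped Real

noncomputable section

lemma aux_inner {E : Type*} [NormedAddCommGroup E] [InnerProductSpace ℝ E]
    (s r : ℝ) (u v : E) :
    r*(s+r)*‖u‖^2 + s*(s+r)*‖v‖^2 = s*r*‖u+v‖^2 + ‖r•u - s•v‖^2 := by
  have h1 : ‖u + v‖^2 = ‖u‖^2 + 2*(inner ℝ u v : ℝ) + ‖v‖^2 := norm_add_sq_real u v
  have h2 : ‖r•u - s•v‖^2 = r^2*‖u‖^2 - 2*(s*r)*(inner ℝ u v : ℝ) + s^2*‖v‖^2 := by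
    rw [norm_sub_sq_real]
    simp [norm_smul, inner_smul_left, inner_smul_right, mul_pow, Real.norm_eq_abs, sq_abs]
    ring
  rw [h1, h2]; ring

lemma aux_exp_eq {E : Type*} [NormedAddCommGroup E] [InnerProductSpace ℝ E]
    (b s r : ℝ) (hs : 0 < s) (hr : 0 < r) (x y z m : E)
    (hm : (s+r) • m = r • x + s • y) :
    -b*‖x-z‖^2/s + -b*‖z-y‖^2/r
      = -b*‖x-y‖^2/(s+r) + -(b*(s+r)/(s*r)*‖z-m‖^2) := by
  have key := aux_inner s r (x-z) (z-y)
  have hvec : r•(x-z) - s•(z-y) = (s+r)•(m - z) := by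
    rw [smul_sub (s+r) m z, hm]; module
  rw [hvec] at key
  have hn : ‖(s+r)•(m - z)‖^2 = (s+r)^2 * ‖z-m‖^2 := by
    rw [norm_smul, norm_sub_rev, mul_pow, Real.norm_eq_abs, sq_abs]
  rw [hn, sub_add_sub_cancel] at key
  have h1 : s ≠ 0 := hs.ne'
  have h2 : r ≠ 0 := hr.ne'
  have h3 : s + r ≠ 0 := by positivity
  field_simp
  linear_combination (-b) * key

lemma aux_beta_half : Complex.betaIntegral (1/2) (1/2) = (π : ℂ) := by
  have h := Complex.Gamma_mul_Gamma_eq_betaIntegral (s := (1/2:ℂ)) (t := (1/2:ℂ)) (by norm_num) (by norm_num)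
  rw [Complex.Gamma_one_half_eq] at h
  norm_num [Complex.Gamma_one] at h
  rw [← h, ← Complex.cpow_add _ _ (Complex.ofReal_ne_zero.mpr Real.pi_ne_zero)]
  norm_num

lemma aux_beta (t : ℝ) (ht : 0 < t) :
    ∫ s in Set.Ioo (0:ℝ) t, s ^ (-(1:ℝ)/2) * (t-s) ^ (-(1:ℝ)/2) = π := by
  have hscaled := Complex.betaIntegral_scaled (1/2) (1/2) ht
  rw [aux_beta_half] at hscaled
  norm_num at hscaled
  have hcongr : ∀ x ∈ Set.uIcc (0:ℝ) t,
      ((fun x : ℝ => ((x ^ (-(1:ℝ)/2) * (t-x) ^ (-(1:ℝ)/2) : ℝ) : ℂ)) x)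
        = (fun x : ℝ => (x:ℂ) ^ (-(1/2) : ℂ) * ((t:ℂ) - x) ^ (-(1/2) : ℂ)) x := by
    intro x hx
    rw [Set.uIcc_of_le ht.le] at hx
    simp only [Complex.ofReal_mul]
    rw [Complex.ofReal_cpow hx.1, Complex.ofReal_cpow (by linarith [hx.2] : (0:ℝ) ≤ t - x)]
    push_cast
    norm_num
  have key : ((∫ x in (0:ℝ)..t, x ^ (-(1:ℝ)/2) * (t-x) ^ (-(1:ℝ)/2) : ℝ) : ℂ) = (π : ℂ) := by
    rw [← intervalIntegral.integral_ofReal, intervalIntegral.integral_congr hcongr]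
    convert hscaled using 2
  have key2 : (∫ x in (0:ℝ)..t, x ^ (-(1:ℝ)/2) * (t-x) ^ (-(1:ℝ)/2)) = π := by
    exact_mod_cast key
  rw [← MeasureTheory.integral_Ioc_eq_integral_Ioo, ← intervalIntegral.integral_of_le ht.le]
  exact key2

lemma aux_beta_int (t : ℝ) (ht : 0 < t) :
    IntegrableOn (fun s => s ^ (-(1:ℝ)/2) * (t-s) ^ (-(1:ℝ)/2)) (Set.Ioo (0:ℝ) t) := by
  have hmeas : Measurable (fun s : ℝ => s ^ (-(1:ℝ)/2) * (t-s) ^ (-(1:ℝ)/2)) := by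
    fun_prop
  have h1 : IntegrableOn (fun s : ℝ => s ^ (-(1:ℝ)/2) * (t-s) ^ (-(1:ℝ)/2)) (Set.Ioc (0:ℝ) (t/2)) := by
    have hi : IntegrableOn (fun s : ℝ => (t/2) ^ (-(1:ℝ)/2) * s ^ (-(1:ℝ)/2)) (Set.Ioc (0:ℝ) (t/2)) := by
      have := (intervalIntegral.intervalIntegrable_rpow' (a := 0) (b := t/2)
        (r := -(1:ℝ)/2) (by norm_num)).const_mul ((t/2) ^ (-(1:ℝ)/2))
      rw [intervalIntegrable_iff_integrableOn_Ioc_of_le (by positivity)] at this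
      exact this
    refine Integrable.mono' hi hmeas.aestronglyMeasurable.restrict ?_
    filter_upwards [ae_restrict_mem measurableSet_Ioc] with s hs
    have hs0 : 0 < s := hs.1
    have hts : (0:ℝ) < t - s := by have := hs.2; linarith
    rw [Real.norm_eq_abs, abs_of_nonneg (by positivity)]
    have h : (t-s) ^ (-(1:ℝ)/2) ≤ (t/2) ^ (-(1:ℝ)/2) := by
      apply Real.rpow_le_rpow_of_nonpos (by positivity) (by linarith [hs.2]) (by norm_num)
    calc s ^ (-(1:ℝ)/2) * (t-s) ^ (-(1:ℝ)/2)
        ≤ s ^ (-(1:ℝ)/2) * (t/2) ^ (-(1:ℝ)/2) :=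
          mul_le_mul_of_nonneg_left h (by positivity)
      _ = (t/2) ^ (-(1:ℝ)/2) * s ^ (-(1:ℝ)/2) := mul_comm _ _
  have h2 : IntegrableOn (fun s : ℝ => s ^ (-(1:ℝ)/2) * (t-s) ^ (-(1:ℝ)/2)) (Set.Ioc (t/2) t) := by
    have hi : IntegrableOn (fun s : ℝ => (t/2) ^ (-(1:ℝ)/2) * (t-s) ^ (-(1:ℝ)/2)) (Set.Ioc (t/2) t) := by
      have h0 := (intervalIntegral.intervalIntegrable_rpow' (a := 0) (b := t/2)
        (r := -(1:ℝ)/2) (by norm_num)).comp_sub_left t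
      have h0' := h0.const_mul ((t/2) ^ (-(1:ℝ)/2))
      rw [intervalIntegrable_iff] at h0'
      refine h0'.mono_set ?_
      rw [Set.uIoc_of_ge (by linarith : t - (t/2) ≤ t - 0)]
      intro s hs
      exact ⟨by linarith [hs.1], by linarith [hs.2]⟩
    refine Integrable.mono' hi hmeas.aestronglyMeasurable.restrict ?_
    filter_upwards [ae_restrict_mem measurableSet_Ioc] with s hs
    have hs0 : 0 < s := lt_trans (by positivity) hs.1
    have hts : (0:ℝ) ≤ t - s := by linarith [hs.2]
    rw [Real.norm_eq_abs, abs_of_nonneg (by positivity)]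
    have h : s ^ (-(1:ℝ)/2) ≤ (t/2) ^ (-(1:ℝ)/2) :=
      Real.rpow_le_rpow_of_nonpos (by positivity) hs.1.le (by norm_num)
    exact mul_le_mul_of_nonneg_right h (by positivity)
  have hsub : Set.Ioo (0:ℝ) t ⊆ Set.Ioc (0:ℝ) (t/2) ∪ Set.Ioc (t/2) t := by
    intro s hs
    rcases le_or_gt s (t/2) with h | h
    · exact Or.inl ⟨hs.1, h⟩
    · exact Or.inr ⟨h, hs.2.le⟩
  exact ((h1.union h2).mono_set hsub)

variable {d : ℕ}

lemma aux_gauss_int (c : ℝ) (hc : 0 < c) (m : EuclideanSpace ℝ (Fin d)) :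
    Integrable (fun z : EuclideanSpace ℝ (Fin d) => Real.exp (-c * ‖z - m‖^2)) := by
  have h := GaussianFourier.integrable_cexp_neg_mul_sq_norm_add
    (V := EuclideanSpace ℝ (Fin d)) (b := (c:ℂ)) (by simpa using hc) 0 (0 : EuclideanSpace ℝ (Fin d))
  simp only [zero_mul, add_zero] at h
  have h2 : Integrable (fun z : EuclideanSpace ℝ (Fin d) => Real.exp (-c * ‖z‖^2)) := by
    have := h.norm
    convert this using 2 with z
    rw [show ‖Complex.exp (-(c:ℂ) * (‖z‖:ℂ) ^ 2)‖ = Real.exp ((-(c:ℂ) * (‖z‖:ℂ) ^ 2).re) from Complex.norm_exp _]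
    norm_num
    left; norm_cast
  exact h2.comp_sub_right m

lemma aux_gauss_val (c : ℝ) (hc : 0 < c) (m : EuclideanSpace ℝ (Fin d)) :
    ∫ z : EuclideanSpace ℝ (Fin d), Real.exp (-c * ‖z - m‖^2)
      = (π / c) ^ ((d:ℝ) / 2) := by
  rw [show ∫ z : EuclideanSpace ℝ (Fin d), Real.exp (-c * ‖z - m‖^2)
      = ∫ z : EuclideanSpace ℝ (Fin d), Real.exp (-c * ‖z‖^2) from
    integral_sub_right_eq_self (fun z : EuclideanSpace ℝ (Fin d) => Real.exp (-c * ‖z‖^2)) m]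
  rw [GaussianFourier.integral_rexp_neg_mul_sq_norm hc]
  norm_num [finrank_euclideanSpace_fin]

/-- composition of two families of kernels satisfying Gaussian bounds. -/
theorem stmt12 (d : ℕ) (hd : 1 ≤ d) (a₁ a₂ b ε : ℝ)
    (ha₁ : 0 < a₁) (ha₂ : 0 < a₂) (hb : 0 < b) (hε : 0 < ε)
    (K₁ K₂ : ℝ → EuclideanSpace ℝ (Fin d) → EuclideanSpace ℝ (Fin d) → ℂ)
    (hK₁m : Measurable fun p : ℝ × EuclideanSpace ℝ (Fin d) × EuclideanSpace ℝ (Fin d) =>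
      K₁ p.1 p.2.1 p.2.2)
    (hK₂m : Measurable fun p : ℝ × EuclideanSpace ℝ (Fin d) × EuclideanSpace ℝ (Fin d) =>
      K₂ p.1 p.2.1 p.2.2)
    (hK₁ : ∀ s : ℝ, 0 < s → ∀ x z : EuclideanSpace ℝ (Fin d),
      ‖K₁ s x z‖ ≤ a₁ * s ^ (-((d : ℝ) + 1) / 2) * Real.exp (ε * s) *
        Real.exp (-b * ‖x - z‖ ^ 2 / s))
    (hK₂ : ∀ s : ℝ, 0 < s → ∀ z y : EuclideanSpace ℝ (Fin d),
      ‖K₂ s z y‖ ≤ a₂ * s ^ (-((d : ℝ) + 1) / 2) * Real.exp (ε * s) *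
        Real.exp (-b * ‖z - y‖ ^ 2 / s)) :
    ∀ t : ℝ, 0 < t → ∀ x y : EuclideanSpace ℝ (Fin d),
      (∫ s in Set.Ioo (0 : ℝ) t, ∫ z : EuclideanSpace ℝ (Fin d),
          ‖K₁ s x z‖ * ‖K₂ (t - s) z y‖) ≤
        Real.pi * (Real.pi / b) ^ ((d : ℝ) / 2) * (a₁ * a₂) * t ^ (-(d : ℝ) / 2) *
          Real.exp (ε * t) * Real.exp (-b * ‖x - y‖ ^ 2 / t) := by
  intro t ht x y
  set D := (π/b)^((d:ℝ)/2) * (a₁*a₂) * t^(-(d:ℝ)/2) * Real.exp (ε*t) *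
    Real.exp (-b*‖x-y‖^2/t) with hD
  have hinner : ∀ s ∈ Set.Ioo (0:ℝ) t,
      (∫ z : EuclideanSpace ℝ (Fin d), ‖K₁ s x z‖ * ‖K₂ (t-s) z y‖)
        ≤ D * (s ^ (-(1:ℝ)/2) * (t-s) ^ (-(1:ℝ)/2)) := by
    intro s hsIoo
    obtain ⟨hs0, hst⟩ := hsIoo
    have hr : 0 < t - s := by linarith
    set c := b*t/(s*(t-s)) with hc
    have hcpos : 0 < c := by positivity
    set m := (t:ℝ)⁻¹ • ((t-s) • x + s • y) with hm
    have hmeq : (s + (t-s)) • m = (t-s) • x + s • y := by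
      rw [hm, show s + (t-s) = t by ring, smul_inv_smul₀ ht.ne']
    set A := a₁*a₂*(s ^ (-((d:ℝ)+1)/2))*((t-s) ^ (-((d:ℝ)+1)/2))*Real.exp (ε*t)*
      Real.exp (-b*‖x-y‖^2/t) with hA
    have hApos : 0 ≤ A := by positivity
    have hptwise : ∀ z, ‖K₁ s x z‖ * ‖K₂ (t-s) z y‖ ≤ A * Real.exp (-c*‖z-m‖^2) := by
      intro z
      have h1 := hK₁ s hs0 x z
      have h2 := hK₂ (t-s) hr z y
      have hle := mul_le_mul h1 h2 (norm_nonneg _) (by positivity)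
      refine hle.trans_eq ?_
      have hexp := aux_exp_eq b s (t-s) hs0 hr x y z m hmeq
      rw [show s + (t-s) = t by ring] at hexp
      have hc' : b*t/(s*(t-s)) = c := rfl
      rw [hc'] at hexp
      calc (a₁ * s ^ (-((d:ℝ)+1)/2) * Real.exp (ε*s) * Real.exp (-b*‖x-z‖^2/s)) *
            (a₂ * (t-s) ^ (-((d:ℝ)+1)/2) * Real.exp (ε*(t-s)) * Real.exp (-b*‖z-y‖^2/(t-s)))
          = (a₁*a₂*(s ^ (-((d:ℝ)+1)/2))*((t-s) ^ (-((d:ℝ)+1)/2))) *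
            Real.exp ((ε*s + ε*(t-s)) + (-b*‖x-z‖^2/s + -b*‖z-y‖^2/(t-s))) := by
            rw [Real.exp_add, Real.exp_add, Real.exp_add]; ring
        _ = (a₁*a₂*(s ^ (-((d:ℝ)+1)/2))*((t-s) ^ (-((d:ℝ)+1)/2))) *
            Real.exp (ε*t + (-b*‖x-y‖^2/t + -(c*‖z-m‖^2))) := by
            congr 1
            apply congrArg
            linarith [hexp]
        _ = A * Real.exp (-c*‖z-m‖^2) := by
            rw [Real.exp_add, Real.exp_add, hA, neg_mul]; ring
    have hint : Integrable (fun z : EuclideanSpace ℝ (Fin d) =>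
        A * Real.exp (-c*‖z-m‖^2)) := (aux_gauss_int c hcpos m).const_mul A
    have hmono := integral_mono_of_nonneg
      (Filter.Eventually.of_forall fun z => mul_nonneg (norm_nonneg _) (norm_nonneg _))
      hint (Filter.Eventually.of_forall hptwise)
    refine hmono.trans ?_
    rw [MeasureTheory.integral_const_mul, aux_gauss_val c hcpos m]
    apply le_of_eq
    -- rpow arithmetic
    have hπc : π/c = (π/b) * s * (t-s) * t⁻¹ := by
      rw [hc]; field_simp
    rw [hπc, hA, hD]
    have hq : (0:ℝ) ≤ π/b := by positivity
    rw [Real.mul_rpow (by positivity) (by positivity : (0:ℝ) ≤ t⁻¹),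
      Real.mul_rpow (by positivity) hr.le,
      Real.mul_rpow hq hs0.le,
      Real.inv_rpow ht.le, ← Real.rpow_neg ht.le]
    have e1 : s ^ (-((d:ℝ)+1)/2) * s ^ ((d:ℝ)/2) = s ^ (-(1:ℝ)/2) := by
      rw [← Real.rpow_add hs0]; congr 1; ring
    have e2 : (t-s) ^ (-((d:ℝ)+1)/2) * (t-s) ^ ((d:ℝ)/2) = (t-s) ^ (-(1:ℝ)/2) := by
      rw [← Real.rpow_add hr]; congr 1; ring
    have e3 : t ^ (-((d:ℝ)/2)) = t ^ (-(d:ℝ)/2) := by congr 1; ring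
    calc a₁*a₂*(s ^ (-((d:ℝ)+1)/2))*((t-s) ^ (-((d:ℝ)+1)/2))*Real.exp (ε*t)*
          Real.exp (-b*‖x-y‖^2/t) *
          ((π/b) ^ ((d:ℝ)/2) * s ^ ((d:ℝ)/2) * (t-s) ^ ((d:ℝ)/2) * t ^ (-((d:ℝ)/2)))
        = (π/b)^((d:ℝ)/2) * (a₁*a₂) * t^(-((d:ℝ)/2)) * Real.exp (ε*t) *
          Real.exp (-b*‖x-y‖^2/t) *
          ((s ^ (-((d:ℝ)+1)/2) * s ^ ((d:ℝ)/2)) *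
            ((t-s) ^ (-((d:ℝ)+1)/2) * (t-s) ^ ((d:ℝ)/2))) := by ring
      _ = (π/b)^((d:ℝ)/2) * (a₁*a₂) * t^(-(d:ℝ)/2) * Real.exp (ε*t) *
          Real.exp (-b*‖x-y‖^2/t) * (s ^ (-(1:ℝ)/2) * (t-s) ^ (-(1:ℝ)/2)) := by
          rw [e1, e2, e3]
  have hF0 : (0:ℝ → ℝ) ≤ᵐ[volume.restrict (Set.Ioo (0:ℝ) t)]
      fun s => ∫ z : EuclideanSpace ℝ (Fin d), ‖K₁ s x z‖ * ‖K₂ (t-s) z y‖ :=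
    Filter.Eventually.of_forall fun s =>
      integral_nonneg fun z => mul_nonneg (norm_nonneg _) (norm_nonneg _)
  have hGint : Integrable (fun s : ℝ => D * (s ^ (-(1:ℝ)/2) * (t-s) ^ (-(1:ℝ)/2)))
      (volume.restrict (Set.Ioo (0:ℝ) t)) := (aux_beta_int t ht).const_mul D
  have hFG : (fun s => ∫ z : EuclideanSpace ℝ (Fin d), ‖K₁ s x z‖ * ‖K₂ (t-s) z y‖)
      ≤ᵐ[volume.restrict (Set.Ioo (0:ℝ) t)]
      fun s => D * (s ^ (-(1:ℝ)/2) * (t-s) ^ (-(1:ℝ)/2)) := by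
    filter_upwards [ae_restrict_mem measurableSet_Ioo] with s hs using hinner s hs
  have hmain := integral_mono_of_nonneg hF0 hGint hFG
  refine hmain.trans ?_
  rw [MeasureTheory.integral_const_mul, aux_beta t ht, hD]
  apply le_of_eq
  ring
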